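/- Let (A, B, C) be a recollement of abelian categories in which the functor r : C ⥤ B is exact. Then spli C ≤ spli B, where spli denotes the supremum of projective dimensions of injective objects. -/

import Mathlib

open CategoryTheory CategoryTheory.Limits

universe v₁ v₂ v₃ u₁ u₂ u₃

/-- A recollement of abelian categories `(A, B, C)`: adjoint triples `(q, i, p)` and
`(l, e, r)` with `i`, `l`, `r` fully faithful and the essential image of `i` equal to
the kernel of `e`. -/
structure AbRecollement (A : Type u₁) (B : Type u₂) (C : Type u₃)
    [Category.{v₁} A] [Category.{v₂} B] [Category.{v₃} C]
    [Abelian A] [Abelian B] [Abelian C] where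
  i : A ⥤ B
  e : B ⥤ C
  q : B ⥤ A
  p : B ⥤ A
  l : C ⥤ B
  r : C ⥤ B
  adj_qi : q ⊣ i
  adj_ip : i ⊣ p
  adj_le : l ⊣ e
  adj_er : e ⊣ r
  i_full : i.Full
  i_faithful : i.Faithful
  l_full : l.Full
  l_faithful : l.Faithful
  r_full : r.Full
  r_faithful : r.Faithful
  essImage_i_eq_ker_e : ∀ X : B, i.essImage X ↔ Limits.IsZero (e.obj X)

universe w v u

/-- `X` has projective dimension `≤ n`: `Extⁱ(X, -) = 0` for all `i > n`. -/
def projDimLE {A : Type u} [Category.{v} A] [Abelian A] [CategoryTheory.HasExt.{w} A]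
    (X : A) (n : ℕ) : Prop :=
  ∀ (Y : A) (i : ℕ), n < i → Subsingleton (CategoryTheory.Abelian.Ext X Y i)

/-- `X` has injective dimension `≤ n`: `Extⁱ(-, X) = 0` for all `i > n`. -/
def injDimLE {A : Type u} [Category.{v} A] [Abelian A] [CategoryTheory.HasExt.{w} A]
    (X : A) (n : ℕ) : Prop :=
  ∀ (Y : A) (i : ℕ), n < i → Subsingleton (CategoryTheory.Abelian.Ext Y X i)

/-- An abelian category (with enough projectives and injectives) is `n`-Gorenstein if
`spli A ≤ n` (every injective has projective dimension `≤ n`) and `silp A ≤ n`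
(every projective has injective dimension `≤ n`). -/
def IsNGorenstein (A : Type u) [Category.{v} A] [Abelian A] [CategoryTheory.HasExt.{w} A]
    (n : ℕ) : Prop :=
  (∀ I : A, CategoryTheory.Injective I → projDimLE.{w} I n) ∧
  (∀ P : A, CategoryTheory.Projective P → injDimLE.{w} P n)

section ExtTransfer

open CategoryTheory CategoryTheory.Limits CategoryTheory.Abelian

universe wa va vb ua ub

variable {B' : Type ub} {C' : Type ua} [Category.{vb} B'] [Category.{va} C']
  [Abelian B'] [Abelian C']

/-- The single functor to the derived category agrees with the composition of
the cochain-complex single functor and the localization functor `Q`. -/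
noncomputable def AuxSingleCompQIso (C' : Type ua) [Category.{va} C'] [Abelian C']
    [HasDerivedCategory C'] :
    (DerivedCategory.singleFunctor C' 0 : C' ⥤ _) ≅
      CochainComplex.singleFunctor C' 0 ⋙ DerivedCategory.Q :=
  (SingleFunctors.evaluation _ _ (0 : ℤ)).mapIso (DerivedCategory.singleFunctorsPostcompQIso C')

/-- For an exact functor `F`, the single functor commutes with `F.mapDerivedCategory`. -/
noncomputable def auxSingleObjIso (F : C' ⥤ B') [F.Additive]
    [PreservesFiniteLimits F] [PreservesFiniteColimits F]
    [HasDerivedCategory B'] [HasDerivedCategory C'] (X : C') :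
    (DerivedCategory.singleFunctor B' 0).obj (F.obj X) ≅
      F.mapDerivedCategory.obj ((DerivedCategory.singleFunctor C' 0).obj X) :=
  (AuxSingleCompQIso B').app (F.obj X) ≪≫
    DerivedCategory.Q.mapIso
      (((HomologicalComplex.singleMapHomologicalComplex F (ComplexShape.up ℤ) 0).app X).symm) ≪≫
    (F.mapDerivedCategoryFactors.app ((CochainComplex.singleFunctor C' 0).obj X)).symm ≪≫
    F.mapDerivedCategory.mapIso ((AuxSingleCompQIso C').app X).symm

/-- Composition of induced functors on complexes. -/
noncomputable def auxMapHCCompIso (F : C' ⥤ B') (G : B' ⥤ C')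
    [F.PreservesZeroMorphisms] [G.PreservesZeroMorphisms] :
    F.mapHomologicalComplex (ComplexShape.up ℤ) ⋙ G.mapHomologicalComplex (ComplexShape.up ℤ) ≅
      (F ⋙ G).mapHomologicalComplex (ComplexShape.up ℤ) :=
  NatIso.ofComponents
    (fun K => HomologicalComplex.Hom.isoOfComponents (fun _ => Iso.refl _) (by intros; exact (Category.id_comp _).trans (Category.comp_id _).symm))
    (by intro K L f; ext; exact (Category.comp_id _).trans (Category.id_comp _).symm)

noncomputable def auxMapDerivedCategoryFaithful (F : C' ⥤ B') (G : B' ⥤ C')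
    [F.Additive] [G.Additive]
    [PreservesFiniteLimits F] [PreservesFiniteColimits F]
    [PreservesFiniteLimits G] [PreservesFiniteColimits G]
    [HasDerivedCategory B'] [HasDerivedCategory C']
    (ν : F ⋙ G ≅ 𝟭 C') :
    (F.mapDerivedCategory ⋙ G.mapDerivedCategory ≅ 𝟭 (DerivedCategory C')) := by
  letI : Localization.Lifting (DerivedCategory.Q (C := C'))
      (HomologicalComplex.quasiIso C' (ComplexShape.up ℤ)) DerivedCategory.Q
      (F.mapDerivedCategory ⋙ G.mapDerivedCategory) :=
    ⟨(Functor.associator _ _ _).symm ≪≫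
      Functor.isoWhiskerRight F.mapDerivedCategoryFactors G.mapDerivedCategory ≪≫
      Functor.associator _ _ _ ≪≫
      Functor.isoWhiskerLeft _ G.mapDerivedCategoryFactors ≪≫
      (Functor.associator _ _ _).symm ≪≫
      Functor.isoWhiskerRight (auxMapHCCompIso F G ≪≫ NatIso.mapHomologicalComplex ν _ ≪≫
        Functor.mapHomologicalComplexIdIso C' _) DerivedCategory.Q ≪≫
      Functor.leftUnitor _⟩
  exact Localization.liftNatIso DerivedCategory.Q
    (HomologicalComplex.quasiIso C' (ComplexShape.up ℤ))
    DerivedCategory.Q DerivedCategory.Q _ _ (Iso.refl _)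

lemma auxExtSubsingletonTransfer [CategoryTheory.HasExt.{wa} B'] [CategoryTheory.HasExt.{wa} C']
    (F : C' ⥤ B') (G : B' ⥤ C') [F.Additive] [G.Additive]
    [PreservesFiniteLimits F] [PreservesFiniteColimits F]
    [PreservesFiniteLimits G] [PreservesFiniteColimits G]
    (ν : F ⋙ G ≅ 𝟭 C') (X Y : C') (i : ℕ)
    (h : Subsingleton (Abelian.Ext.{wa} (F.obj X) (F.obj Y) i)) :
    Subsingleton (Abelian.Ext.{wa} X Y i) := by
  letI := HasDerivedCategory.standard B'
  letI := HasDerivedCategory.standard C'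
  haveI : F.mapDerivedCategory.Faithful :=
    Functor.Faithful.of_comp_iso (auxMapDerivedCategoryFaithful F G ν)
  have key : Function.Injective (fun (φ : (DerivedCategory.singleFunctor C' 0).obj X ⟶
      ((DerivedCategory.singleFunctor C' 0).obj Y)⟦(i : ℤ)⟧) =>
      (auxSingleObjIso F X).hom ≫ F.mapDerivedCategory.map φ ≫
        (F.mapDerivedCategory.commShiftIso (i : ℤ)).hom.app
          ((DerivedCategory.singleFunctor C' 0).obj Y) ≫
        (shiftFunctor (DerivedCategory B') (i : ℤ)).map (auxSingleObjIso F Y).inv) := by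
    intro φ ψ hφψ
    apply F.mapDerivedCategory.map_injective
    dsimp only at hφψ
    rw [cancel_epi] at hφψ
    rw [← Category.assoc, ← Category.assoc, cancel_mono, cancel_mono] at hφψ
    exact hφψ
  have hsub : Subsingleton ((DerivedCategory.singleFunctor B' 0).obj (F.obj X) ⟶
      ((DerivedCategory.singleFunctor B' 0).obj (F.obj Y))⟦(i : ℤ)⟧) :=
    Equiv.subsingleton
      (Abelian.Ext.homEquiv.symm : _ ≃ Abelian.Ext.{wa} (F.obj X) (F.obj Y) i)
  constructor
  intro a b
  apply Abelian.Ext.homEquiv.injective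
  exact key (hsub.elim _ _)

end ExtTransfer

/-- Let `(A, B, C)` be a recollement of abelian categories in which
`r : C ⥤ B` is exact.  Then `spli C ≤ spli B`: any bound `n` on the projective
dimensions of injectives of `B` is also a bound for the injectives of `C`. -/
theorem spli_le_of_r_exact
    {A : Type u₁} {B : Type u₂} {C : Type u₃}
    [Category.{v₁} A] [Category.{v₂} B] [Category.{v₃} C]
    [Abelian A] [Abelian B] [Abelian C]
    [EnoughProjectives B] [EnoughInjectives B]
    [EnoughProjectives C] [EnoughInjectives C]
    [CategoryTheory.HasExt.{w} B] [CategoryTheory.HasExt.{w} C]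
    (R : AbRecollement A B C)
    [PreservesFiniteLimits R.r] [PreservesFiniteColimits R.r]
    (n : ℕ) (hB : ∀ I : B, Injective I → projDimLE.{w} I n) :
    ∀ J : C, Injective J → projDimLE.{w} J n := by
  intro J hJ Y i hi
  haveI := R.r_full
  haveI := R.r_faithful
  haveI : R.e.IsRightAdjoint := R.adj_le.isRightAdjoint
  haveI : R.r.IsRightAdjoint := R.adj_er.isRightAdjoint
  haveI : PreservesFiniteLimits R.e := by
    haveI := R.adj_le.rightAdjoint_preservesLimits
    exact PreservesLimitsOfSize.preservesFiniteLimits.{0,0} _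
  haveI : PreservesFiniteColimits R.e := by
    haveI := R.adj_er.leftAdjoint_preservesColimits
    exact PreservesColimitsOfSize.preservesFiniteColimits.{0,0} _
  haveI : R.e.Additive := Functor.additive_of_preserves_binary_products _
  haveI : R.r.Additive := Functor.additive_of_preserves_binary_products _
  haveI : Injective J := hJ
  have hrJ : Injective (R.r.obj J) := Injective.injective_of_adjoint R.adj_er J
  have hsub : Subsingleton (CategoryTheory.Abelian.Ext (R.r.obj J) (R.r.obj Y) i) :=
    hB _ hrJ _ i hi
  exact auxExtSubsingletonTransfer R.r R.e (asIso R.adj_er.counit) J Y i hsub
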